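/- Let H be a complex Hilbert space with dim H ≥ 2 and let a be a normal bounded operator on H. Then a has a nontrivial closed invariant subspace (a closed subspace M with 0 ≠ M ≠ H and a(M) ⊆ M). -/

import Mathlib

open ContinuousLinearMap in
/-- Every normal bounded operator on a complex Hilbert space of dimension at
least two has a nontrivial closed invariant subspace. -/
theorem normal_invariant_subspace {H : Type*} [NormedAddCommGroup H]
    [InnerProductSpace ℂ H] [CompleteSpace H]
    (hdim : 2 ≤ Module.rank ℂ H)
    (a : H →L[ℂ] H) (hnormal : a ∘L adjoint a = adjoint a ∘L a) :
    ∃ M : Submodule ℂ H, IsClosed (M : Set H) ∧ M ≠ ⊥ ∧ M ≠ ⊤ ∧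
      ∀ x ∈ M, a x ∈ M := by
  have hnt : Nontrivial H := by
    rw [← rank_pos_iff_nontrivial (R := ℂ)]
    exact lt_of_lt_of_le (by norm_num) hdim
  have hstar : IsStarNormal a := ⟨by
    rw [commute_iff_eq, star_eq_adjoint]
    exact hnormal.symm⟩
  by_cases hsub : (spectrum ℂ a).Subsingleton
  · -- spectrum is a single point; a is scalar
    obtain ⟨μ, hμ⟩ := spectrum.nonempty a
    have hspec : spectrum ℂ a = {μ} :=
      Set.eq_singleton_iff_unique_mem.mpr ⟨hμ, fun x hx => hsub hx hμ⟩
    have ha : a = algebraMap ℂ (H →L[ℂ] H) μ := by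
      have h1 : cfc (fun x : ℂ => x - μ) a = 0 := by
        rw [cfc_congr (g := fun _ => (0 : ℂ)) (by intro x hx; simp_all [hspec])]
        exact cfc_const_zero ℂ a
      have h2 : cfc (fun x : ℂ => x - μ) a = a - algebraMap ℂ (H →L[ℂ] H) μ := by
        rw [cfc_sub _ _ a, cfc_id' ℂ a, cfc_const μ a]
      rw [h2] at h1
      linear_combination (norm := abel) h1
    obtain ⟨x, hx⟩ := exists_ne (0 : H)
    refine ⟨Submodule.span ℂ {x}, ?_, ?_, ?_, ?_⟩
    · have : FiniteDimensional ℂ (Submodule.span ℂ ({x} : Set H)) :=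
        FiniteDimensional.span_of_finite ℂ (Set.finite_singleton x)
      exact Submodule.closed_of_finiteDimensional _
    · simpa [Submodule.span_singleton_eq_bot] using hx
    · intro htop
      have h1 : Module.rank ℂ (Submodule.span ℂ ({x} : Set H)) ≤ 1 := by
        simpa using rank_span_le (R := ℂ) ({x} : Set H)
      rw [htop, rank_top] at h1
      exact absurd (hdim.trans h1) (by norm_num)
    · intro y hy
      have : a y = μ • y := by rw [ha]; simp [Algebra.algebraMap_eq_smul_one]
      rw [this]
      exact Submodule.smul_mem _ _ hy
  · -- spectrum has at least two points
    rw [Set.not_subsingleton_iff] at hsub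
    obtain ⟨z, hz, w, hw, hzw⟩ := hsub
    set d : ℝ := dist z w with hd
    have hd0 : 0 < d := dist_pos.mpr hzw
    set f : ℂ → ℂ := fun x => ((max (1 - 2 * dist x z / d) 0 : ℝ) : ℂ) with hf
    set g : ℂ → ℂ := fun x => ((max (1 - 2 * dist x w / d) 0 : ℝ) : ℂ) with hg
    have hfc : Continuous f := by
      apply Continuous.comp Complex.continuous_ofReal
      fun_prop
    have hgc : Continuous g := by
      apply Continuous.comp Complex.continuous_ofReal
      fun_prop
    have hfz : f z = 1 := by simp [hf]
    have hgw : g w = 1 := by simp [hg]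
    have hfg : ∀ x, g x * f x = 0 := by
      intro x
      rcases lt_or_ge (dist x z) (d / 2) with h | h
      · have hxw : d / 2 ≤ dist x w := by
          by_contra hlt
          push_neg at hlt
          have := dist_triangle z x w
          rw [dist_comm z x] at this
          nlinarith [this]
        have : g x = 0 := by
          simp only [hg, Complex.ofReal_eq_zero]
          apply max_eq_right
          rw [sub_nonpos, le_div_iff₀ hd0] at *
          nlinarith
        rw [this, zero_mul]
      · have : f x = 0 := by
          simp only [hf, Complex.ofReal_eq_zero]
          apply max_eq_right
          rw [sub_nonpos]
          rw [le_div_iff₀ hd0]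
          nlinarith
        rw [this, mul_zero]
    set F := cfc f a with hF
    set G := cfc g a with hG
    have hGF : G * F = 0 := by
      rw [hG, hF, ← cfc_mul g f a hgc.continuousOn hfc.continuousOn]
      calc cfc (fun x => g x * f x) a = cfc (fun _ : ℂ => (0:ℂ)) a := by
            exact cfc_congr (fun x _ => hfg x)
        _ = 0 := cfc_const_zero ℂ a
    have hFne : F ≠ 0 := by
      intro h0
      have := cfc_map_spectrum (a := a) (f := f) hstar hfc.continuousOn
      rw [← hF, h0, spectrum.zero_eq] at this
      have h1 : (1 : ℂ) ∈ f '' spectrum ℂ a := ⟨z, hz, hfz⟩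
      rw [← this] at h1
      simp at h1
    have hGne : G ≠ 0 := by
      intro h0
      have := cfc_map_spectrum (a := a) (f := g) hstar hgc.continuousOn
      rw [← hG, h0, spectrum.zero_eq] at this
      have h1 : (1 : ℂ) ∈ g '' spectrum ℂ a := ⟨w, hw, hgw⟩
      rw [← this] at h1
      simp at h1
    have hcomm : a * G = G * a := by
      conv_lhs => rw [← cfc_id ℂ a]
      conv_rhs => rw [← cfc_id ℂ a]
      rw [hG, ← cfc_mul _ g a (continuousOn_id) hgc.continuousOn,
        ← cfc_mul g _ a hgc.continuousOn (continuousOn_id)]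
      exact cfc_congr (fun x _ => mul_comm x (g x))
    refine ⟨LinearMap.ker (G : H →ₗ[ℂ] H), ?_, ?_, ?_, ?_⟩
    · exact ContinuousLinearMap.isClosed_ker G
    · obtain ⟨x, hx⟩ : ∃ x, F x ≠ 0 := by
        by_contra h
        push_neg at h
        exact hFne (ContinuousLinearMap.ext fun x => by simp [h x])
      refine (Submodule.ne_bot_iff _).mpr ⟨F x, ?_, hx⟩
      have : G (F x) = (G * F) x := rfl
      rw [LinearMap.mem_ker, ContinuousLinearMap.coe_coe]
      rw [this, hGF]
      rfl
    · intro htop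
      apply hGne
      ext x
      have : x ∈ LinearMap.ker (G : H →ₗ[ℂ] H) := htop ▸ Submodule.mem_top
      simpa using this
    · intro x hx
      rw [LinearMap.mem_ker, ContinuousLinearMap.coe_coe] at *
      have : G (a x) = (G * a) x := rfl
      rw [this, ← hcomm]
      show a (G x) = 0
      rw [hx, map_zero]
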